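/- (Theorem 1, Part B (iii): belief cascade) For every Δ > 0 there exists β₀ ∈ (0, β*) such that for every lower bound b ∈ (0, β₀): b is a fixed point of ψ̃_Δ^{[b,βhi]} (so b is a Berk–Nash equilibrium belief when the belief space is [b, βhi]), and Δ + R(h(b), b) − R(h(b), β*) > 0, so this equilibrium is not self-confirming. -/

import Mathlib

open Set

theorem stmt_5
    (βstar βhi : ℝ)
    (hs : 0 < βstar) (hsh : βstar < βhi)
    (R : ℝ → ℝ → ℝ)
    (hRcont : ContinuousOn (fun p : ℝ × ℝ => R p.1 p.2) (Icc (0:ℝ) 1 ×ˢ Ici (0:ℝ)))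
    (hR0 : ∀ h ∈ Icc (0:ℝ) 1, R h 0 = 0)
    (hR0' : ∀ β ∈ Ici (0:ℝ), R 0 β = 0)
    (hRβ : ∀ h ∈ Ioc (0:ℝ) 1, StrictMonoOn (fun β => R h β) (Ici 0))
    (hRh : ∀ β > (0:ℝ), StrictMonoOn (fun h => R h β) (Icc 0 1))
    (hRid : ∀ h₁ h₂ β₁ β₂ : ℝ, 0 ≤ h₁ → h₁ < h₂ → h₂ ≤ 1 → 0 ≤ β₁ → β₁ < β₂ →
      R h₂ β₁ - R h₁ β₁ < R h₂ β₂ - R h₁ β₂)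
    (H : ℝ → ℝ)
    (hHcont : ContinuousOn H (Ici 0))
    (hHmono : StrictMonoOn H (Ici 0))
    (hH0 : H 0 = 0)
    (hHin : ∀ β > (0:ℝ), H β ∈ Ioo (0:ℝ) 1)
    -- ψ Δ b is the Berk--Nash belief map when the belief space is [b, βhi]
    (ψ : ℝ → ℝ → ℝ → ℝ)
    (hψ : ∀ Δ : ℝ, ∀ b ∈ Ioo (0:ℝ) βstar, ∀ β ∈ Icc b βhi,
      ψ Δ b β ∈ Icc b βhi ∧
      ∀ x ∈ Icc b βhi, x ≠ ψ Δ b β →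
        |Δ + R (H β) (ψ Δ b β) - R (H β) βstar| < |Δ + R (H β) x - R (H β) βstar|) :
    ∀ Δ > (0:ℝ), ∃ β₀ ∈ Ioo (0:ℝ) βstar, ∀ b ∈ Ioo (0:ℝ) β₀,
      ψ Δ b b = b ∧ 0 < Δ + R (H b) b - R (H b) βstar := by
  intro Δ hΔ
  have hmaps : MapsTo (fun b => (H b, βstar)) (Ici (0:ℝ)) (Icc (0:ℝ) 1 ×ˢ Ici (0:ℝ)) := by
    intro b hb
    rcases eq_or_lt_of_le (Set.mem_Ici.mp hb : (0:ℝ) ≤ b) with h | h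
    · simp [← h, hH0, hs.le]
    · exact ⟨⟨(hHin b h).1.le, (hHin b h).2.le⟩, hs.le⟩
  have hf : ContinuousOn (fun b => R (H b) βstar) (Ici (0:ℝ)) :=
    hRcont.comp (hHcont.prodMk continuousOn_const) hmaps
  have hf0 : R (H 0) βstar = 0 := by rw [hH0]; exact hR0' βstar hs.le
  have hev : ∀ᶠ b in nhdsWithin 0 (Ici (0:ℝ)), R (H b) βstar < Δ := by
    have ht : Filter.Tendsto (fun b => R (H b) βstar) (nhdsWithin 0 (Ici (0:ℝ)))
        (nhds (0:ℝ)) := by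
      have := hf 0 self_mem_Ici
      rwa [ContinuousWithinAt, hf0] at this
    exact ht.eventually (Filter.Tendsto.eventually_lt_const hΔ Filter.tendsto_id)
  obtain ⟨δ, hδ, hδ'⟩ := (nhdsGE_basis_of_exists_gt (α := ℝ) ⟨1, one_pos⟩).eventually_iff.mp hev
  refine ⟨min δ βstar / 2, ⟨by positivity, ?_⟩, ?_⟩
  · calc min δ βstar / 2 ≤ βstar / 2 := by
          have := min_le_right δ βstar; linarith
      _ < βstar := by linarith
  intro b hb
  have hbpos : 0 < b := hb.1
  have hbδ : b < δ := by
    have := hb.2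
    have h1 : min δ βstar / 2 ≤ δ / 2 := by
      have := min_le_left δ βstar; linarith
    linarith
  have hbstar : b < βstar := by
    have := hb.2
    have h1 : min δ βstar / 2 ≤ βstar / 2 := by
      have := min_le_right δ βstar; linarith
    linarith
  have hfb : R (H b) βstar < Δ := hδ' ⟨hbpos.le, hbδ⟩
  have hHb : H b ∈ Ioo (0:ℝ) 1 := hHin b hbpos
  have hmono : StrictMonoOn (fun β => R (H b) β) (Ici (0:ℝ)) :=
    hRβ (H b) ⟨hHb.1, hHb.2.le⟩
  have hRb0 : R (H b) 0 = 0 := hR0 (H b) ⟨hHb.1.le, hHb.2.le⟩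
  have hRbb : 0 ≤ R (H b) b := by
    have := hmono.monotoneOn self_mem_Ici (Set.mem_Ici.mpr hbpos.le) hbpos.le
    simpa [hRb0] using this
  have hkey : 0 < Δ + R (H b) b - R (H b) βstar := by linarith
  refine ⟨?_, hkey⟩
  have hbIoo : b ∈ Ioo (0:ℝ) βstar := ⟨hbpos, hbstar⟩
  have hbIcc : b ∈ Icc b βhi := ⟨le_refl b, by linarith⟩
  obtain ⟨hmem, hmin⟩ := hψ Δ b hbIoo b hbIcc
  by_contra hne
  have hlt := hmin b hbIcc (Ne.symm hne)
  have hψge : b ≤ ψ Δ b b := hmem.1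
  have hRψ : R (H b) b ≤ R (H b) (ψ Δ b b) :=
    hmono.monotoneOn (Set.mem_Ici.mpr hbpos.le)
      (Set.mem_Ici.mpr (le_trans hbpos.le hψge)) hψge
  have hA : 0 < Δ + R (H b) (ψ Δ b b) - R (H b) βstar := by linarith
  rw [abs_of_pos hA, abs_of_pos hkey] at hlt
  linarith
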